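/- arXiv:1310.5455 — 2 statements merged into one kernel-verified Lean document; each statement's English description precedes it below -/
import Mathlib

section
/- Let F be algebraically closed of characteristic 3. The bracket ⁅x, y⁆ := x*y − y*x makes the split Okubo algebra O into a Lie algebra over F (it satisfies antisymmetry and the Jacobi identity); this 8-dimensional Lie algebra is simple, and its Killing form is identically zero. -/
open scoped BigOperators

/-- The grading group `ℤ₃ × ℤ₃`. -/
abbrev OkG : Type := ZMod 3 × ZMod 3

/-- The index set of the standard basis of the split Okubo algebra:
the nonzero elements of `ℤ₃ × ℤ₃`. -/
abbrev OkI : Type := {g : OkG // g ≠ 0}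

variable (R : Type) [CommRing R]

/-- The structure constants `c(g,h) = 1 - ((g₁h₂ - g₂h₁).val : ℤ)` of the split Okubo algebra. -/
def okc (g h : OkG) : R :=
  ((1 - (((g.1 * h.2 - g.2 * h.1 : ZMod 3)).val : ℤ) : ℤ) : R)

/-- Underlying function of the split Okubo multiplication. -/
def okMulFun (x y : OkI → R) : OkI → R := fun k =>
  ∑ g : OkI, ∑ h : OkI,
    (if (g : OkG) + (h : OkG) = (k : OkG) then okc R (g : OkG) (h : OkG) else 0) * (x g * y h)

/-- The split Okubo multiplication, as a bilinear map: the unique `R`-bilinear map with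
`e_g * e_h = 0` if `g + h = 0` and `e_g * e_h = c(g,h) • e_(g+h)` otherwise. -/
def okMul : (OkI → R) →ₗ[R] (OkI → R) →ₗ[R] (OkI → R) :=
  LinearMap.mk₂ R (okMulFun R)
    (by intro m₁ m₂ n; funext k; simp [okMulFun, add_mul, mul_add, Finset.sum_add_distrib])
    (by intro c m n; funext k
        simp only [okMulFun, Pi.smul_apply, smul_eq_mul, Finset.mul_sum]
        exact Finset.sum_congr rfl fun g _ => Finset.sum_congr rfl fun h _ => by ring)
    (by intro m n₁ n₂; funext k; simp [okMulFun, add_mul, mul_add, Finset.sum_add_distrib])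
    (by intro c m n; funext k
        simp only [okMulFun, Pi.smul_apply, smul_eq_mul, Finset.mul_sum]
        exact Finset.sum_congr rfl fun g _ => Finset.sum_congr rfl fun h _ => by ring)

/-- The norm (quadratic form) of the split Okubo algebra: the unique quadratic form
with `n(e_g) = 0` and polar form `b(e_g, e_h) = 1` if `g + h = 0`, and `0` otherwise. -/
def okN (x : OkI → R) : R :=
  x ⟨(1, 0), by decide⟩ * x ⟨(2, 0), by decide⟩ +
  x ⟨(0, 1), by decide⟩ * x ⟨(0, 2), by decide⟩ +
  x ⟨(1, 1), by decide⟩ * x ⟨(2, 2), by decide⟩ +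
  x ⟨(1, 2), by decide⟩ * x ⟨(2, 1), by decide⟩

/-- The polar form of the norm `okN`. -/
def okB (x y : OkI → R) : R := okN R (x + y) - okN R x - okN R y

/-- The basis element `e_g` of the split Okubo algebra. -/
def okE (g : OkI) : OkI → R := Pi.single g 1

/-- The sum `e = ∑_{g ∈ I} e_g` of all eight basis elements. -/
def oke : OkI → R := ∑ g : OkI, okE R g

/-- The linear map `u ↦ ad*_u`, where `ad*_u (v) = u * v - v * u`. -/
def okAdL : (OkI → R) →ₗ[R] Module.End R (OkI → R) := okMul R - (okMul R).flip

-- auxiliary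
def okDel (a b : OkG) : ZMod 3 := a.1 * b.2 - a.2 * b.1
def okPhi (F : Type) [Field F] [CharP F 3] : ZMod 3 →+* F := ZMod.castHom dvd_rfl F
def okE' (F : Type) [Field F] (t : OkG) : OkI → F := fun k => if (k:OkG) = t then 1 else 0

set_option linter.unusedSectionVars false
variable (F : Type) [Field F] [CharP F 3]

lemma okc_eq (a b : OkG) : okc F a b = 1 - okPhi F (okDel a b) := by
  simp [okc, okPhi, okDel, ZMod.natCast_val]

lemma okE'_zero : okE' F 0 = 0 := by
  funext k; simp [okE']; exact k.2

lemma okE'_ne (t : OkG) (ht : t ≠ 0) : okE' F t = okE F ⟨t, ht⟩ := by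
  funext k; simp [okE', okE, Pi.single_apply, Subtype.ext_iff]

lemma okMul_single (a b : OkI) :
    okMul F (okE F a) (okE F b) = okc F a b • okE' F ((a:OkG) + b) := by
  funext k
  simp [okMul, okMulFun, okE, okE', Pi.single_apply, mul_ite, ite_mul,
    Finset.sum_ite_eq, eq_comm]

set_option linter.unusedSectionVars false

lemma okPhi_del_sub (a b : OkG) :
    okc F a b - okc F b a = okPhi F (okDel a b) := by
  rw [okc_eq, okc_eq]
  have h : okDel b a = -okDel a b := by simp [okDel]; ring
  rw [h, map_neg]
  have h3 : (3 : F) = 0 := CharP.cast_eq_zero F 3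
  ring_nf
  linear_combination (-(okPhi F (okDel a b))) * h3

lemma okAdL_single_single (a b : OkI) :
    okAdL F (okE F a) (okE F b) = okPhi F (okDel a b) • okE' F ((a:OkG) + b) := by
  have h1 := okMul_single F a b
  have h2 := okMul_single F b a
  have : okAdL F (okE F a) (okE F b)
      = okMul F (okE F a) (okE F b) - okMul F (okE F b) (okE F a) := rfl
  rw [this, h1, h2, show (b:OkG) + a = (a:OkG) + b from add_comm _ _, ← sub_smul,
    okPhi_del_sub]

lemma okDel_add_right (a t : OkG) : okDel a (a + t) = okDel a t := by
  simp [okDel]; ring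

lemma okAdL_single_E' (a : OkI) (t : OkG) :
    okAdL F (okE F a) (okE' F t) = okPhi F (okDel (a:OkG) t) • okE' F ((a:OkG) + t) := by
  by_cases ht : t = 0
  · subst ht
    rw [okE'_zero, map_zero]
    simp [okDel]
  · rw [okE'_ne F t ht, okAdL_single_single]

lemma pi_decomp (x : OkI → F) : x = ∑ k : OkI, x k • okE F k := by
  funext j
  rw [Finset.sum_apply]
  simp [okE, Pi.single_apply]

lemma okAdL_cube_E' (a : OkI) (t : OkG) :
    okAdL F (okE F a) (okAdL F (okE F a) (okAdL F (okE F a) (okE' F t)))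
      = okPhi F (okDel (a:OkG) t) • okE' F t := by
  rw [okAdL_single_E', map_smul, okAdL_single_E', map_smul, map_smul, okAdL_single_E']
  rw [smul_smul, smul_smul, ← map_mul, ← map_mul]
  have h1 : (a:OkG) + ((a:OkG) + ((a:OkG) + t)) = t := by
    have : ((a:OkG)) + ((a:OkG) + ((a:OkG) + t)) = 3 • (a:OkG) + t := by module
    rw [this]
    have h3 : (3 : ℕ) • (a:OkG) = 0 := by
      have : ∀ g : OkG, 3 • g = 0 := by decide
      exact this _
    rw [h3, zero_add]
  rw [okDel_add_right, okDel_add_right, okDel_add_right, h1]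
  congr 1
  congr 1
  have : ∀ d : ZMod 3, d * d * d = d := by decide
  exact this _

lemma okAdL_cube_single (a k : OkI) :
    okAdL F (okE F a) (okAdL F (okE F a) (okAdL F (okE F a) (okE F k)))
      = okPhi F (okDel (a:OkG) (k:OkG)) • okE F k := by
  rw [show okE F k = okE' F (k:OkG) from (okE'_ne F _ k.2).symm, okAdL_cube_E']

lemma okAdL_cube (a : OkI) (x : OkI → F) :
    okAdL F (okE F a) (okAdL F (okE F a) (okAdL F (okE F a) x))
      = fun k : OkI => okPhi F (okDel (a:OkG) (k:OkG)) * x k := by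
  conv_lhs => rw [pi_decomp F x]
  rw [map_sum, map_sum, map_sum]
  simp only [map_smul]
  funext j
  rw [Finset.sum_apply]
  simp only [okAdL_cube_single]
  simp [okE, Pi.single_apply, mul_comm]

lemma okAdL_apply (x y : OkI → F) : okAdL F y x = okMul F y x - okMul F x y := rfl

lemma okD_mem (S : Submodule F (OkI → F))
    (hS : ∀ x ∈ S, ∀ y : OkI → F, okAdL F y x ∈ S) :
    ∀ f : OkG → ZMod 3, ∀ x ∈ S, (fun k : OkI => okPhi F (f (k:OkG)) * x k) ∈ S := by
  have hT : ∀ a : OkI, ∀ x ∈ S, (fun k : OkI => okPhi F (okDel (a:OkG) (k:OkG)) * x k) ∈ S := by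
    intro a x hx
    rw [← okAdL_cube]
    exact hS _ (hS _ (hS _ hx _) _) _
  have h1 : ∀ x ∈ S, (fun k : OkI => okPhi F ((k:OkG).2) * x k) ∈ S := by
    intro x hx
    have h := hT ⟨(1,0), by decide⟩ x hx
    have e : ∀ k : OkI, okDel ((1 : ZMod 3), (0 : ZMod 3)) (k:OkG) = (k:OkG).2 := by
      intro k; simp [okDel]
    simpa only [e] using h
  have h2 : ∀ x ∈ S, (fun k : OkI => okPhi F (-(k:OkG).1) * x k) ∈ S := by
    intro x hx
    have h := hT ⟨(0,1), by decide⟩ x hx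
    have e : ∀ k : OkI, okDel ((0 : ZMod 3), (1 : ZMod 3)) (k:OkG) = -(k:OkG).1 := by
      intro k; simp [okDel]
    simpa only [e] using h
  have hq1 : ∀ (c : ZMod 3), ∀ x ∈ S, (fun k : OkI => okPhi F ((k:OkG).1 - c) * x k) ∈ S := by
    intro c x hx
    have hA := h2 x hx
    have e : (fun k : OkI => okPhi F ((k:OkG).1 - c) * x k)
        = -(fun k : OkI => okPhi F (-(k:OkG).1) * x k) - okPhi F c • x := by
      funext k
      simp only [Pi.neg_apply, Pi.sub_apply, Pi.smul_apply, smul_eq_mul, map_sub, map_neg]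
      ring
    rw [e]
    exact S.sub_mem (S.neg_mem hA) (S.smul_mem _ hx)
  have hq2 : ∀ (c : ZMod 3), ∀ x ∈ S, (fun k : OkI => okPhi F ((k:OkG).2 - c) * x k) ∈ S := by
    intro c x hx
    have hA := h1 x hx
    have e : (fun k : OkI => okPhi F ((k:OkG).2 - c) * x k)
        = (fun k : OkI => okPhi F ((k:OkG).2) * x k) - okPhi F c • x := by
      funext k
      simp only [Pi.sub_apply, Pi.smul_apply, smul_eq_mul, map_sub]
      ring
    rw [e]
    exact S.sub_mem hA (S.smul_mem _ hx)
  have hfac1 : ∀ (c : ZMod 3), ∀ x ∈ S,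
      (fun k : OkI => okPhi F (1 - ((k:OkG).1 - c)^2) * x k) ∈ S := by
    intro c x hx
    have m2 := hq1 c _ (hq1 c x hx)
    have e : (fun k : OkI => okPhi F (1 - ((k:OkG).1 - c)^2) * x k)
        = x - (fun k : OkI => okPhi F ((k:OkG).1 - c) *
            ((fun j : OkI => okPhi F ((j:OkG).1 - c) * x j) k)) := by
      funext k
      simp only [Pi.sub_apply, map_sub, map_one, map_pow]
      ring
    rw [e]
    exact S.sub_mem hx m2
  have hfac2 : ∀ (c : ZMod 3), ∀ x ∈ S,
      (fun k : OkI => okPhi F (1 - ((k:OkG).2 - c)^2) * x k) ∈ S := by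
    intro c x hx
    have m2 := hq2 c _ (hq2 c x hx)
    have e : (fun k : OkI => okPhi F (1 - ((k:OkG).2 - c)^2) * x k)
        = x - (fun k : OkI => okPhi F ((k:OkG).2 - c) *
            ((fun j : OkI => okPhi F ((j:OkG).2 - c) * x j) k)) := by
      funext k
      simp only [Pi.sub_apply, map_sub, map_one, map_pow]
      ring
    rw [e]
    exact S.sub_mem hx m2
  have hp : ∀ (t : OkG), ∀ x ∈ S,
      (fun k : OkI => okPhi F ((1 - ((k:OkG).1 - t.1)^2) * (1 - ((k:OkG).2 - t.2)^2)) * x k) ∈ S := by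
    intro t x hx
    have m1 := hfac2 t.2 x hx
    have m2 := hfac1 t.1 _ m1
    have e : (fun k : OkI => okPhi F ((1 - ((k:OkG).1 - t.1)^2) * (1 - ((k:OkG).2 - t.2)^2)) * x k)
        = (fun k : OkI => okPhi F (1 - ((k:OkG).1 - t.1)^2) *
            ((fun j : OkI => okPhi F (1 - ((j:OkG).2 - t.2)^2) * x j) k)) := by
      funext k
      simp only [map_mul]
      ring
    rw [e]
    exact m2
  intro f x hx
  have key : ∀ u t : OkG, (1 - (u.1 - t.1)^2) * (1 - (u.2 - t.2)^2)
      = if t = u then (1 : ZMod 3) else 0 := by decide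
  have e : (fun k : OkI => okPhi F (f (k:OkG)) * x k)
      = ∑ t : OkG, okPhi F (f t) •
          (fun k : OkI => okPhi F ((1 - ((k:OkG).1 - t.1)^2) * (1 - ((k:OkG).2 - t.2)^2)) * x k) := by
    funext k
    rw [Finset.sum_apply]
    simp only [Pi.smul_apply, smul_eq_mul, key]
    simp [Finset.sum_ite_eq, apply_ite (okPhi F)]
  rw [e]
  exact S.sum_mem fun t _ => S.smul_mem _ (hp t x hx)

lemma okPhi_ne_zero (d : ZMod 3) (hd : d ≠ 0) : okPhi F d ≠ 0 := by
  intro h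
  exact hd ((okPhi F).injective (by simpa using h))

lemma okE_mem_of_coord (S : Submodule F (OkI → F))
    (hS : ∀ x ∈ S, ∀ y : OkI → F, okAdL F y x ∈ S)
    (x : OkI → F) (hx : x ∈ S) (k0 : OkI) (hk : x k0 ≠ 0) : okE F k0 ∈ S := by
  have h := okD_mem F S hS (fun g => if g = (k0:OkG) then 1 else 0) x hx
  have e : (fun k : OkI => okPhi F (if (k:OkG) = (k0:OkG) then (1:ZMod 3) else 0) * x k)
      = x k0 • okE F k0 := by
    funext k
    by_cases hkk : k = k0
    · subst hkk; simp [okE, Pi.single_apply]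
    · have : (k:OkG) ≠ (k0:OkG) := fun hc => hkk (Subtype.ext hc)
      simp [this, okE, Pi.single_apply, hkk]
  rw [e] at h
  have := S.smul_mem (x k0)⁻¹ h
  rwa [smul_smul, inv_mul_cancel₀ hk, one_smul] at this

lemma okStep (S : Submodule F (OkI → F))
    (hS : ∀ x ∈ S, ∀ y : OkI → F, okAdL F y x ∈ S)
    (j : OkI) (hj : okE F j ∈ S) (d : OkG) (hd : okDel d (j:OkG) ≠ 0)
    (hsum : d + (j:OkG) ≠ 0) : okE F ⟨d + (j:OkG), hsum⟩ ∈ S := by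
  have hd0 : d ≠ 0 := by
    intro h; subst h; simp [okDel] at hd
  have h := hS _ hj (okE F ⟨d, hd0⟩)
  rw [okAdL_single_single] at h
  rw [okE'_ne F _ hsum] at h
  have := S.smul_mem (okPhi F (okDel d (j:OkG)))⁻¹ h
  rwa [smul_smul, inv_mul_cancel₀ (okPhi_ne_zero F _ hd), one_smul] at this

lemma okReach (S : Submodule F (OkI → F))
    (hS : ∀ x ∈ S, ∀ y : OkI → F, okAdL F y x ∈ S)
    (k0 : OkI) (h0 : okE F k0 ∈ S) : ∀ k : OkI, okE F k ∈ S := by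
  intro k
  by_cases hkk : k = k0
  · subst hkk; exact h0
  by_cases hΔ : okDel ((k:OkG) - (k0:OkG)) (k0:OkG) ≠ 0
  · have hsum : ((k:OkG) - (k0:OkG)) + (k0:OkG) ≠ 0 := by
      rw [sub_add_cancel]; exact k.2
    have := okStep F S hS k0 h0 _ hΔ hsum
    have e : (⟨((k:OkG) - (k0:OkG)) + (k0:OkG), hsum⟩ : OkI) = k :=
      Subtype.ext (sub_add_cancel _ _)
    rwa [e] at this
  · push_neg at hΔ
    have hk2 : (k:OkG) = -(k0:OkG) := by
      have key : ∀ u v : OkG, u ≠ 0 → v ≠ 0 → u ≠ v → okDel (u - v) v = 0 → u = -v := by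
        decide
      exact key _ _ k.2 k0.2 (fun h => hkk (Subtype.ext h)) hΔ
    set g : OkG := (-(k0:OkG).2, (k0:OkG).1) with hg
    have hΔ1 : okDel g (k0:OkG) ≠ 0 := by
      have key : ∀ v : OkG, v ≠ 0 → okDel (-v.2, v.1) v ≠ 0 := by decide
      exact key _ k0.2
    have hsum1 : g + (k0:OkG) ≠ 0 := by
      have key : ∀ v : OkG, v ≠ 0 → (-v.2, v.1) + v ≠ 0 := by decide
      exact key _ k0.2
    have h1 := okStep F S hS k0 h0 g hΔ1 hsum1
    have hΔ2 : okDel (-(k0:OkG) - (g + (k0:OkG))) (g + (k0:OkG)) ≠ 0 := by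
      have key : ∀ v : OkG, v ≠ 0 →
          okDel (-v - ((-v.2, v.1) + v)) ((-v.2, v.1) + v) ≠ 0 := by decide
      exact key _ k0.2
    have hsum2 : (-(k0:OkG) - (g + (k0:OkG))) + (g + (k0:OkG)) ≠ 0 := by
      rw [sub_add_cancel]
      simp only [neg_ne_zero]
      exact k0.2
    have h2 := okStep F S hS _ h1 _ hΔ2 hsum2
    have e : (⟨(-(k0:OkG) - (g + (k0:OkG))) + (g + (k0:OkG)), hsum2⟩ : OkI) = k := by
      apply Subtype.ext
      simp only [sub_add_cancel]
      exact hk2.symm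
    rwa [e] at h2

lemma okSimple (S : Submodule F (OkI → F))
    (hS : ∀ x ∈ S, ∀ y : OkI → F, okAdL F y x ∈ S) : S = ⊥ ∨ S = ⊤ := by
  by_cases hbot : S = ⊥
  · exact Or.inl hbot
  right
  obtain ⟨x, hxS, hx0⟩ := Submodule.exists_mem_ne_zero_of_ne_bot hbot
  have hk : ∃ k0 : OkI, x k0 ≠ 0 := by
    by_contra h
    push_neg at h
    exact hx0 (funext h)
  obtain ⟨k0, hk0⟩ := hk
  have hall := okReach F S hS k0 (okE_mem_of_coord F S hS x hxS k0 hk0)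
  rw [Submodule.eq_top_iff']
  intro y
  rw [pi_decomp F y]
  exact S.sum_mem fun k _ => S.smul_mem _ (hall k)

lemma jacobi_single (a b c : OkI) :
    okAdL F (okE F a) (okAdL F (okE F b) (okE F c))
      + okAdL F (okE F b) (okAdL F (okE F c) (okE F a))
      + okAdL F (okE F c) (okAdL F (okE F a) (okE F b)) = 0 := by
  rw [okAdL_single_single, okAdL_single_single, okAdL_single_single,
      map_smul, map_smul, map_smul, okAdL_single_E', okAdL_single_E', okAdL_single_E',
      smul_smul, smul_smul, smul_smul, ← map_mul, ← map_mul, ← map_mul]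
  have e1 : (b:OkG) + ((c:OkG) + (a:OkG)) = (a:OkG) + ((b:OkG) + (c:OkG)) := by ring
  have e2 : (c:OkG) + ((a:OkG) + (b:OkG)) = (a:OkG) + ((b:OkG) + (c:OkG)) := by ring
  rw [e1, e2, ← add_smul, ← add_smul, ← map_add, ← map_add]
  have key : ∀ u v w : OkG,
      okDel v w * okDel u (v + w) + (okDel w u * okDel v (w + u)
        + okDel u v * okDel w (u + v)) = 0 := by decide
  rw [show okDel (↑b) ↑c * okDel (↑a) (↑b + ↑c) + okDel (↑c) ↑a * okDel (↑b) (↑c + ↑a)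
        + okDel (↑a) ↑b * okDel (↑c) (↑a + ↑b)
      = okDel (↑b) ↑c * okDel (↑a) (↑b + ↑c) + (okDel (↑c) ↑a * okDel (↑b) (↑c + ↑a)
        + okDel (↑a) ↑b * okDel (↑c) (↑a + ↑b)) from (add_assoc _ _ _)]
  rw [key, map_zero, zero_smul]

lemma adad_single (a b c : OkI) :
    okAdL F (okE F a) (okAdL F (okE F b) (okE F c))
      = okPhi F (okDel (b:OkG) (c:OkG) * okDel (a:OkG) ((b:OkG) + (c:OkG)))
          • okE' F ((a:OkG) + ((b:OkG) + (c:OkG))) := by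
  rw [okAdL_single_single, map_smul, okAdL_single_E', smul_smul, ← map_mul]

def okCyc : OkI × OkI × OkI ≃ OkI × OkI × OkI where
  toFun p := (p.2.1, p.2.2, p.1)
  invFun p := (p.2.2, p.1, p.2.1)
  left_inv p := rfl
  right_inv p := rfl

lemma ad2 (y z : OkI → F) :
    okAdL F y z = ∑ b : OkI, ∑ c : OkI, (y b * z c) • okAdL F (okE F b) (okE F c) := by
  conv_lhs => rw [pi_decomp F y]
  rw [map_sum (g := okAdL F), LinearMap.sum_apply]
  refine Finset.sum_congr rfl fun b _ => ?_
  rw [map_smul, LinearMap.smul_apply]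
  conv_lhs => rw [pi_decomp F z]
  rw [map_sum, Finset.smul_sum]
  refine Finset.sum_congr rfl fun c _ => ?_
  rw [map_smul, smul_smul]

lemma trip (x y z : OkI → F) :
    okAdL F x (okAdL F y z)
      = ∑ p : OkI × OkI × OkI, (x p.1 * y p.2.1 * z p.2.2) •
          okAdL F (okE F p.1) (okAdL F (okE F p.2.1) (okE F p.2.2)) := by
  rw [Fintype.sum_prod_type]
  conv_lhs => rw [pi_decomp F x]
  rw [map_sum (g := okAdL F), LinearMap.sum_apply]
  refine Finset.sum_congr rfl fun a _ => ?_
  rw [map_smul, LinearMap.smul_apply]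
  conv_lhs => rw [ad2 F y z]
  rw [map_sum, Finset.smul_sum, Fintype.sum_prod_type]
  refine Finset.sum_congr rfl fun b _ => ?_
  rw [map_sum, Finset.smul_sum]
  refine Finset.sum_congr rfl fun c _ => ?_
  rw [map_smul, smul_smul, mul_assoc]

lemma jacobi (x y z : OkI → F) :
    okAdL F x (okAdL F y z) + okAdL F y (okAdL F z x) + okAdL F z (okAdL F x y) = 0 := by
  rw [trip F x y z, trip F y z x, trip F z x y]
  have e2 : (∑ p : OkI × OkI × OkI, (y p.1 * z p.2.1 * x p.2.2) •
        okAdL F (okE F p.1) (okAdL F (okE F p.2.1) (okE F p.2.2)))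
      = ∑ p : OkI × OkI × OkI, (x p.1 * y p.2.1 * z p.2.2) •
        okAdL F (okE F p.2.1) (okAdL F (okE F p.2.2) (okE F p.1)) := by
    refine Fintype.sum_equiv okCyc.symm _ _ fun p => ?_
    simp only [okCyc, Equiv.coe_fn_symm_mk]
    congr 1
    ring
  have e3 : (∑ p : OkI × OkI × OkI, (z p.1 * x p.2.1 * y p.2.2) •
        okAdL F (okE F p.1) (okAdL F (okE F p.2.1) (okE F p.2.2)))
      = ∑ p : OkI × OkI × OkI, (x p.1 * y p.2.1 * z p.2.2) •
        okAdL F (okE F p.2.2) (okAdL F (okE F p.1) (okE F p.2.1)) := by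
    refine Fintype.sum_equiv okCyc _ _ fun p => ?_
    simp only [okCyc, Equiv.coe_fn_mk]
    congr 1
    ring
  rw [e2, e3, ← Finset.sum_add_distrib, ← Finset.sum_add_distrib]
  refine Finset.sum_eq_zero fun p _ => ?_
  rw [← smul_add, ← smul_add, jacobi_single, smul_zero]

lemma killing_single (a b : OkI) :
    LinearMap.trace F (OkI → F)
      ((okAdL F (okE F a)).comp (okAdL F (okE F b))) = 0 := by
  rw [LinearMap.trace_eq_matrix_trace F (Pi.basisFun F OkI)]
  rw [Matrix.trace]
  have hb : ∀ i : OkI, (Pi.basisFun F OkI) i = okE F i := by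
    intro i; funext j; simp [okE, Pi.basisFun_apply, Pi.single_apply]
  have key : ∀ i : OkI, (LinearMap.toMatrix (Pi.basisFun F OkI) (Pi.basisFun F OkI)
      ((okAdL F (okE F a)).comp (okAdL F (okE F b)))) i i
      = okPhi F (okDel (b:OkG) (i:OkG) * okDel (a:OkG) ((b:OkG) + (i:OkG))
          * (if (i:OkG) = (a:OkG) + ((b:OkG) + (i:OkG)) then 1 else 0)) := by
    intro i
    rw [LinearMap.toMatrix_apply, hb, LinearMap.comp_apply, adad_single]
    simp [Pi.basisFun_repr, okE', apply_ite (okPhi F), mul_comm]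
  simp only [Matrix.diag_apply, key]
  rw [← map_sum]
  have hz : ∀ a b : OkI, (∑ i : OkI, okDel (b:OkG) (i:OkG) * okDel (a:OkG) ((b:OkG) + (i:OkG))
      * (if (i:OkG) = (a:OkG) + ((b:OkG) + (i:OkG)) then 1 else 0)) = 0 := by decide
  rw [hz a b, map_zero]

lemma killing (x y : OkI → F) :
    LinearMap.trace F (OkI → F) ((okAdL F x).comp (okAdL F y)) = 0 := by
  rw [← Module.End.mul_eq_comp]
  conv_lhs => rw [pi_decomp F x]
  rw [map_sum (g := okAdL F), Finset.sum_mul, map_sum]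
  refine Finset.sum_eq_zero fun a _ => ?_
  rw [map_smul, smul_mul_assoc, map_smul]
  conv_lhs => rw [pi_decomp F y]
  rw [map_sum (g := okAdL F), Finset.mul_sum, map_sum, Finset.smul_sum]
  refine Finset.sum_eq_zero fun b _ => ?_
  rw [map_smul, mul_smul_comm, map_smul, Module.End.mul_eq_comp, killing_single,
    smul_zero, smul_zero]

/-- Over an algebraically closed field of characteristic `3`, the bracket
`⁅x, y⁆ = x*y - y*x` makes the split Okubo algebra into a Lie algebra (antisymmetry and
the Jacobi identity hold); this `8`-dimensional Lie algebra is simple and its Killing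
form is identically zero. -/
theorem okubo_minus_simple_killing_zero (F : Type) [Field F] [IsAlgClosed F] [CharP F 3] :
    (∀ x y : OkI → F, okMul F x y - okMul F y x = -(okMul F y x - okMul F x y)) ∧
    (∀ x : OkI → F, okMul F x x - okMul F x x = 0) ∧
    (∀ x y z : OkI → F,
      okAdL F x (okAdL F y z) + okAdL F y (okAdL F z x) + okAdL F z (okAdL F x y) = 0) ∧
    Module.finrank F (OkI → F) = 8 ∧
    (∀ S : Submodule F (OkI → F),
      (∀ x ∈ S, ∀ y : OkI → F, okMul F y x - okMul F x y ∈ S) → S = ⊥ ∨ S = ⊤) ∧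
    (∃ x y : OkI → F, okMul F x y - okMul F y x ≠ 0) ∧
    (∀ x y : OkI → F,
      LinearMap.trace F (OkI → F) ((okAdL F x).comp (okAdL F y)) = 0) := by
  refine ⟨fun x y => (neg_sub _ _).symm, fun x => sub_self _, jacobi F, ?_, ?_, ?_, killing F⟩
  · rw [Module.finrank_pi]
    rfl
  · intro S hS
    exact okSimple F S (fun x hx y => hS x hx y)
  · refine ⟨okE F ⟨(1,0), by decide⟩, okE F ⟨(0,1), by decide⟩, ?_⟩
    have h : okMul F (okE F ⟨(1,0), by decide⟩) (okE F ⟨(0,1), by decide⟩)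
        - okMul F (okE F ⟨(0,1), by decide⟩) (okE F ⟨(1,0), by decide⟩)
        = okAdL F (okE F (⟨(1,0), by decide⟩ : OkI)) (okE F ⟨(0,1), by decide⟩) := rfl
    rw [h, okAdL_single_single]
    intro hc
    have := congrFun hc ⟨(1,1), by decide⟩
    simp only [Pi.smul_apply, okE', Pi.zero_apply, smul_eq_mul] at this
    rw [if_pos (by decide)] at this
    have h1 : okDel ((1:ZMod 3),(0:ZMod 3)) ((0:ZMod 3),(1:ZMod 3)) = 1 := by decide
    rw [h1, map_one, mul_one] at this
    exact one_ne_zero this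
end

section
/- Let F be algebraically closed of characteristic 3, R a commutative unital F-algebra, and O_R the split Okubo algebra over R with basis (e_g)_{g ∈ I} and product *. For α, β ∈ R with α³ = β³ = 1, the R-linear map d_{α,β} defined by d_{α,β}(e_{(i,j)}) = α^{i.val}·β^{j.val} • e_{(i,j)} is an automorphism of (O_R, *). Moreover, every R-linear automorphism φ of (O_R, *) admits a unique factorization φ = h ∘ d_{α,β}, where h is an R-linear automorphism of (O_R, *) fixing the element e = Σ_{g ∈ I} e_g and α, β ∈ R satisfy α³ = β³ = 1. -/
open scoped BigOperators

variable (R : Type) [CommRing R]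

/-- The diagonal map `d_{α,β} : e_(i,j) ↦ α^i β^j • e_(i,j)`. -/
def okDiag (α β : R) : (OkI → R) →ₗ[R] (OkI → R) where
  toFun x := fun g => α ^ (g : OkG).1.val * β ^ (g : OkG).2.val * x g
  map_add' := by intro a b; funext g; simp [mul_add]
  map_smul' := by
    intro c a; funext g
    simp only [Pi.smul_apply, smul_eq_mul, RingHom.id_apply]
    ring

-- AUX
lemma intCast_eq_of_mod (h3 : (3:R) = 0) {a b : ℤ} (h : a % 3 = b % 3) : (a : R) = (b : R) := by
  obtain ⟨k, hk⟩ : ∃ k : ℤ, a = b + 3 * k := ⟨(a-b)/3, by omega⟩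
  rw [hk]; push_cast; rw [h3]; ring

lemma okc_add_okc (h3 : (3:R) = 0) (a b : OkG) : okc R a b + okc R b a = -1 := by
  have hd : b.1*a.2 - b.2*a.1 = -(a.1*b.2 - a.2*b.1) := by ring
  unfold okc
  rw [hd]
  have hv : ∀ e : ZMod 3, (e.val + (-e).val) % 3 = 0 := by decide
  rw [← Int.cast_add, show (-1 : R) = (((-1:ℤ)) : R) by push_cast; ring]
  exact intCast_eq_of_mod R h3 (by have := hv (a.1*b.2 - a.2*b.1); omega)

def X0 (x : OkI → R) : OkG → R := fun g => if h : g = 0 then 0 else x ⟨g, h⟩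
lemma X0_zero (x : OkI → R) : X0 R x 0 = 0 := dif_pos rfl
lemma X0_ne (x : OkI → R) (g : OkG) (h : g ≠ 0) : X0 R x g = x ⟨g, h⟩ := dif_neg h

lemma okE_self (k : OkI) : okE R k k = 1 := Pi.single_eq_same k 1
lemma okE_ne (k b : OkI) (h : b ≠ k) : okE R k b = 0 := Pi.single_eq_of_ne h 1

lemma oke_apply (p : OkI) : oke R p = 1 := by
  rw [oke, Finset.sum_apply]
  rw [Fintype.sum_eq_single p (fun b hb => okE_ne R b p (Ne.symm hb))]
  exact okE_self R p

lemma okMul_applyL (x y : OkI → R) (k : OkI) :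
    okMul R x y k = ∑ h : OkI, okc R ((k:OkG) - (h:OkG)) h * (X0 R x ((k:OkG) - h) * y h) := by
  show okMulFun R x y k = _
  rw [okMulFun, Finset.sum_comm]
  refine Finset.sum_congr rfl fun h _ => ?_
  by_cases hk : (k:OkG) - (h:OkG) = 0
  · rw [hk, X0_zero, zero_mul, mul_zero]
    refine Finset.sum_eq_zero fun g _ => ?_
    rw [if_neg, zero_mul]
    intro hc
    exact g.2 (by rw [← hc, add_sub_cancel_right] at hk; exact hk)
  · refine (Fintype.sum_eq_single (⟨(k:OkG) - h, hk⟩ : OkI) fun b hb => ?_).trans ?_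
    · rw [if_neg, zero_mul]
      intro hc
      exact hb (Subtype.ext (eq_sub_of_add_eq hc))
    · rw [if_pos (by simp), X0_ne R x _ hk]

lemma okMul_applyR (x y : OkI → R) (k : OkI) :
    okMul R x y k = ∑ g : OkI, okc R g ((k:OkG) - (g:OkG)) * (x g * X0 R y ((k:OkG) - g)) := by
  show okMulFun R x y k = _
  rw [okMulFun]
  refine Finset.sum_congr rfl fun g _ => ?_
  by_cases hk : (k:OkG) - (g:OkG) = 0
  · rw [hk, X0_zero, mul_zero, mul_zero]
    refine Finset.sum_eq_zero fun h _ => ?_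
    rw [if_neg, zero_mul]
    intro hc
    exact h.2 (by rw [← hc] at hk; rw [add_sub_cancel_left] at hk; exact hk)
  · refine (Fintype.sum_eq_single (⟨(k:OkG) - g, hk⟩ : OkI) fun b hb => ?_).trans ?_
    · rw [if_neg, zero_mul]
      intro hc
      exact hb (Subtype.ext (eq_sub_of_add_eq' hc))
    · rw [if_pos (by simp), X0_ne R y _ hk]

lemma mulE_right (x : OkI → R) (k p : OkI) :
    okMul R x (okE R k) p = okc R ((p:OkG) - (k:OkG)) k * X0 R x ((p:OkG) - k) := by
  rw [okMul_applyL]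
  refine (Fintype.sum_eq_single k fun b hb => ?_).trans ?_
  · rw [okE_ne R k b hb, mul_zero, mul_zero]
  · rw [okE_self, mul_one]

lemma mulE_left (x : OkI → R) (k p : OkI) :
    okMul R (okE R k) x p = okc R k ((p:OkG) - (k:OkG)) * X0 R x ((p:OkG) - k) := by
  rw [okMul_applyR]
  refine (Fintype.sum_eq_single k fun b hb => ?_).trans ?_
  · rw [okE_ne R k b hb, zero_mul, mul_zero]
  · rw [okE_self, one_mul]

lemma KIv (h3 : (3:R) = 0) (x : OkI → R) :
    okMul R (oke R) x + okMul R x (oke R) = x - (∑ m, x m) • oke R := by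
  funext p
  rw [Pi.add_apply, Pi.sub_apply, Pi.smul_apply, oke_apply, smul_eq_mul, mul_one]
  rw [okMul_applyL, okMul_applyR]
  rw [← Finset.sum_add_distrib]
  have key : ∀ h : OkI, okc R ((p:OkG)-(h:OkG)) h * (X0 R (oke R) ((p:OkG)-h) * x h)
      + okc R h ((p:OkG)-(h:OkG)) * (x h * X0 R (oke R) ((p:OkG)-h))
      = (if h = p then 0 else -1) * x h := by
    intro h
    by_cases hp : (p:OkG) - (h:OkG) = 0
    · have hhp : h = p := Subtype.ext (sub_eq_zero.mp hp).symm
      rw [hp, X0_zero, if_pos hhp]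
      ring
    · have hne : ¬ (h = p) := fun e => hp (by rw [e, sub_self])
      rw [X0_ne R _ _ hp, oke_apply, if_neg hne, mul_one, one_mul]
      linear_combination x h * okc_add_okc R h3 ((p:OkG)-(h:OkG)) (h:OkG)
  rw [Finset.sum_congr rfl fun h _ => key h]
  have key2 : ∀ h : OkI, (if h = p then 0 else (-1:R)) * x h = (if h = p then x h else 0) - x h := by
    intro h; by_cases hh : h = p <;> simp [hh]
  rw [Finset.sum_congr rfl fun h _ => key2 h, Finset.sum_sub_distrib]
  rw [Finset.sum_ite_eq' Finset.univ p x]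
  simp

lemma pow_val_add (α : R) (hα : α^3 = 1) (i j : ZMod 3) :
    α ^ (i+j).val = α ^ i.val * α ^ j.val := by
  rw [← pow_add, ZMod.val_add]
  conv_rhs => rw [← Nat.div_add_mod (i.val + j.val) 3]
  rw [pow_add, pow_mul, hα, one_pow, one_mul]

lemma okDiag_apply (α β : R) (x : OkI → R) (g : OkI) :
    okDiag R α β x g = α ^ (g : OkG).1.val * β ^ (g : OkG).2.val * x g := rfl

lemma diag_mul (α β : R) (hα : α^3=1) (hβ : β^3=1) (x y : OkI → R) :
    okDiag R α β (okMul R x y) = okMul R (okDiag R α β x) (okDiag R α β y) := by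
  funext k
  rw [okDiag_apply]
  show _ * okMulFun R x y k = okMulFun R (okDiag R α β x) (okDiag R α β y) k
  rw [okMulFun, okMulFun, Finset.mul_sum]
  refine Finset.sum_congr rfl fun g _ => ?_
  rw [Finset.mul_sum]
  refine Finset.sum_congr rfl fun h _ => ?_
  by_cases hc : (g:OkG) + (h:OkG) = (k:OkG)
  · rw [if_pos hc, okDiag_apply, okDiag_apply, ← hc]
    rw [show ((g:OkG)+(h:OkG)).1 = (g:OkG).1 + (h:OkG).1 from rfl,
        show ((g:OkG)+(h:OkG)).2 = (g:OkG).2 + (h:OkG).2 from rfl,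
        pow_val_add R α hα, pow_val_add R β hβ]
    ring
  · rw [if_neg hc]; ring

lemma diag_comp (a b a' b' : R) (ha : a * a' = 1) (hb : b * b' = 1) (x : OkI → R) :
    okDiag R a b (okDiag R a' b' x) = x := by
  funext g
  rw [okDiag_apply, okDiag_apply,
    show a ^ (g:OkG).1.val * b ^ (g:OkG).2.val * (a' ^ (g:OkG).1.val * b' ^ (g:OkG).2.val * x g)
      = (a*a')^(g:OkG).1.val * ((b*b')^(g:OkG).2.val * x g) from by rw [mul_pow, mul_pow]; ring,
    ha, hb, one_pow, one_pow, one_mul, one_mul]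

def i10 : OkI := ⟨(1,0), by decide⟩
def i01 : OkI := ⟨(0,1), by decide⟩
def i20 : OkI := ⟨(2,0), by decide⟩
def i02 : OkI := ⟨(0,2), by decide⟩
def i11 : OkI := ⟨(1,1), by decide⟩
def i21 : OkI := ⟨(2,1), by decide⟩
def i12 : OkI := ⟨(1,2), by decide⟩
def i22 : OkI := ⟨(2,2), by decide⟩


/-- Let `F` be algebraically closed of characteristic `3` and `R` a
commutative unital `F`-algebra.  For `α, β ∈ R` with `α³ = β³ = 1` the diagonal map
`d_{α,β}` is an automorphism of the split Okubo algebra `(O_R, *)` over `R`, and every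
`R`-linear automorphism `φ` of `(O_R, *)` factors uniquely as `φ = h ∘ d_{α,β}` with `h`
an automorphism fixing `e = ∑_g e_g` and `α³ = β³ = 1`. -/
theorem okubo_automorphism_factorization (F : Type) [Field F] [IsAlgClosed F] [CharP F 3]
    (R : Type) [CommRing R] [Algebra F R] :
    (∀ α β : R, α ^ 3 = 1 → β ^ 3 = 1 →
      Function.Bijective (okDiag R α β) ∧
      ∀ x y, okDiag R α β (okMul R x y) = okMul R (okDiag R α β x) (okDiag R α β y)) ∧
    (∀ φ : (OkI → R) ≃ₗ[R] (OkI → R),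
      (∀ x y, φ (okMul R x y) = okMul R (φ x) (φ y)) →
      ∃! t : ((OkI → R) ≃ₗ[R] (OkI → R)) × R × R,
        (∀ x y, t.1 (okMul R x y) = okMul R (t.1 x) (t.1 y)) ∧
        t.1 (oke R) = oke R ∧
        t.2.1 ^ 3 = 1 ∧ t.2.2 ^ 3 = 1 ∧
        ∀ x, φ x = t.1 (okDiag R t.2.1 t.2.2 x)) := by
  have h3 : (3:R) = 0 := by
    have h1 : (3:F) = 0 := by exact_mod_cast CharP.cast_eq_zero F 3
    calc (3:R) = algebraMap F R 3 := (map_ofNat _ 3).symm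
    _ = algebraMap F R 0 := by rw [h1]
    _ = 0 := map_zero _
  constructor
  · intro α β hα hβ
    refine ⟨?_, fun x y => diag_mul R α β hα hβ x y⟩
    exact Function.bijective_iff_has_inverse.mpr
      ⟨okDiag R (α^2) (β^2),
        fun x => diag_comp R (α^2) (β^2) α β (by linear_combination hα) (by linear_combination hβ) x,
        fun x => diag_comp R α β (α^2) (β^2) (by linear_combination hα) (by linear_combination hβ) x⟩
  · intro φ hφ
    set u := φ.symm (oke R) with hu
    have hsymm : ∀ a b, φ.symm (okMul R a b) = okMul R (φ.symm a) (φ.symm b) := by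
      intro a b
      apply φ.injective
      rw [LinearEquiv.apply_symm_apply, hφ, LinearEquiv.apply_symm_apply,
        LinearEquiv.apply_symm_apply]
    have ME : ∀ k : OkI, okMul R u (okE R k) + okMul R (okE R k) u
        = okE R k - (∑ m, φ (okE R k) m) • u := by
      intro k
      have h2 := congrArg φ.symm (KIv R h3 (φ (okE R k)))
      rw [map_add, map_sub, map_smul, hsymm, hsymm, LinearEquiv.symm_apply_apply, ← hu] at h2
      exact h2
    have E1 : ∀ k : OkI, (∑ m, φ (okE R k) m) * u k = 1 := by
      intro k
      have hc := congrFun (ME k) k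
      rw [Pi.add_apply, Pi.sub_apply, Pi.smul_apply, smul_eq_mul, mulE_right, mulE_left,
        sub_self, X0_zero, mul_zero, mul_zero, okE_self] at hc
      linear_combination hc
    have E2 : ∀ (k p a : OkI), (a:OkG) = (p:OkG) - (k:OkG) →
        u a = (∑ m, φ (okE R k) m) * u p := by
      intro k p a ha
      have hpk : (p:OkG) - (k:OkG) ≠ 0 := by rw [← ha]; exact a.2
      have hne : p ≠ k := fun e => hpk (by rw [e, sub_self])
      have hc := congrFun (ME k) p
      rw [Pi.add_apply, Pi.sub_apply, Pi.smul_apply, smul_eq_mul, mulE_right, mulE_left,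
        okE_ne R k p hne, X0_ne R u _ hpk] at hc
      have hsub : (⟨(p:OkG)-(k:OkG), hpk⟩ : OkI) = a := (Subtype.ext ha).symm
      rw [hsub] at hc
      linear_combination (-1) * hc + u a * okc_add_okc R h3 ((p:OkG)-(k:OkG)) (k:OkG)
    obtain ⟨μ, hμ⟩ : ∃ m, m = ∑ m, φ (okE R i20) m := ⟨_, rfl⟩
    obtain ⟨ν, hν⟩ : ∃ m, m = ∑ m, φ (okE R i02) m := ⟨_, rfl⟩
    have r1 : u i11 = μ * u i01 := by rw [hμ]; exact E2 i20 i01 i11 (by decide)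
    have r2 : u i21 = μ * u i11 := by rw [hμ]; exact E2 i20 i11 i21 (by decide)
    have r3 : u i01 = μ * u i21 := by rw [hμ]; exact E2 i20 i21 i01 (by decide)
    have r4 : u i20 = μ * u i10 := by rw [hμ]; exact E2 i20 i10 i20 (by decide)
    have r5 : u i12 = μ * u i02 := by rw [hμ]; exact E2 i20 i02 i12 (by decide)
    have r6 : u i22 = μ * u i12 := by rw [hμ]; exact E2 i20 i12 i22 (by decide)
    have c1 : u i02 = ν * u i01 := by rw [hν]; exact E2 i02 i01 i02 (by decide)
    have c2 : u i11 = ν * u i10 := by rw [hν]; exact E2 i02 i10 i11 (by decide)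
    have c3 : u i12 = ν * u i11 := by rw [hν]; exact E2 i02 i11 i12 (by decide)
    have c4 : u i10 = ν * u i12 := by rw [hν]; exact E2 i02 i12 i10 (by decide)
    have e20 : μ * u i20 = 1 := by rw [hμ]; exact E1 i20
    have e02 : ν * u i02 = 1 := by rw [hν]; exact E1 i02
    have e01 : (∑ m, φ (okE R i01) m) * u i01 = 1 := E1 i01
    have e10 : (∑ m, φ (okE R i10) m) * u i10 = 1 := E1 i10
    have hch1 : μ^3 * u i01 = u i01 := by rw [show μ^3 * u i01 = μ * (μ * (μ * u i01)) from by ring, ← r1, ← r2, ← r3]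
    have hμ3 : μ^3 = 1 := by
      calc μ^3 = μ^3 * ((∑ m, φ (okE R i01) m) * u i01) := by rw [e01, mul_one]
      _ = (∑ m, φ (okE R i01) m) * (μ^3 * u i01) := by ring
      _ = 1 := by rw [hch1, e01]
    have hch2 : ν^3 * u i10 = u i10 := by rw [show ν^3 * u i10 = ν * (ν * (ν * u i10)) from by ring, ← c2, ← c3, ← c4]
    have hν3 : ν^3 = 1 := by
      calc ν^3 = ν^3 * ((∑ m, φ (okE R i10) m) * u i10) := by rw [e10, mul_one]
      _ = (∑ m, φ (okE R i10) m) * (ν^3 * u i10) := by ring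
      _ = 1 := by rw [hch2, e10]
    set γ := u i10 with hγ
    set δ := u i01 with hδ
    have hγμ : γ = μ := by
      calc γ = μ^3 * γ := by rw [hμ3, one_mul]
      _ = μ * (μ * (μ * γ)) := by ring
      _ = μ * (μ * u i20) := by rw [← r4]
      _ = μ := by rw [e20, mul_one]
    have hδν : δ = ν := by
      calc δ = ν^3 * δ := by rw [hν3, one_mul]
      _ = ν * (ν * (ν * δ)) := by ring
      _ = ν * (ν * u i02) := by rw [← c1]
      _ = ν := by rw [e02, mul_one]
    have hγ3 : γ^3 = 1 := by rw [hγμ]; exact hμ3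
    have hδ3 : δ^3 = 1 := by rw [hδν]; exact hν3
    have v20 : u i20 = γ^2 := by rw [r4, ← hγμ]; ring
    have v02 : u i02 = δ^2 := by rw [c1, ← hδν]; ring
    have v11 : u i11 = γ * δ := by rw [r1, ← hγμ]
    have v21 : u i21 = γ^2 * δ := by rw [r2, v11, ← hγμ]; ring
    have v12 : u i12 = γ * δ^2 := by rw [r5, v02, ← hγμ]
    have v22 : u i22 = γ^2 * δ^2 := by rw [r6, v12, ← hγμ]; ring
    have hv0 : ((0:ZMod 3)).val = 0 := rfl
    have hv1 : ((1:ZMod 3)).val = 1 := rfl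
    have hv2 : ((2:ZMod 3)).val = 2 := rfl
    have uform : u = okDiag R γ δ (oke R) := by
      funext g
      rw [okDiag_apply, oke_apply, mul_one]
      have hcases : ∀ g : OkI, g = i10 ∨ g = i01 ∨ g = i20 ∨ g = i02 ∨ g = i11 ∨ g = i21 ∨ g = i12 ∨ g = i22 := by decide
      rcases hcases g with h|h|h|h|h|h|h|h <;> rw [h]
      · rw [show ((i10:OkG)).1 = 1 from rfl, show ((i10:OkG)).2 = 0 from rfl, hv1, hv0, ← hγ]; try ring
      · rw [show ((i01:OkG)).1 = 0 from rfl, show ((i01:OkG)).2 = 1 from rfl, hv1, hv0, ← hδ]; try ring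
      · rw [show ((i20:OkG)).1 = 2 from rfl, show ((i20:OkG)).2 = 0 from rfl, hv2, hv0, v20]; try ring
      · rw [show ((i02:OkG)).1 = 0 from rfl, show ((i02:OkG)).2 = 2 from rfl, hv2, hv0, v02]; try ring
      · rw [show ((i11:OkG)).1 = 1 from rfl, show ((i11:OkG)).2 = 1 from rfl, hv1, v11]; try ring
      · rw [show ((i21:OkG)).1 = 2 from rfl, show ((i21:OkG)).2 = 1 from rfl, hv2, hv1, v21]; try ring
      · rw [show ((i12:OkG)).1 = 1 from rfl, show ((i12:OkG)).2 = 2 from rfl, hv1, hv2, v12]; try ring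
      · rw [show ((i22:OkG)).1 = 2 from rfl, show ((i22:OkG)).2 = 2 from rfl, hv2, v22]; try ring
    have hgg : γ * γ^2 = 1 := by linear_combination hγ3
    have hgg' : γ^2 * γ = 1 := by linear_combination hγ3
    have hdd : δ * δ^2 = 1 := by linear_combination hδ3
    have hdd' : δ^2 * δ = 1 := by linear_combination hδ3
    let D : (OkI → R) ≃ₗ[R] (OkI → R) :=
      LinearEquiv.ofLinear (okDiag R (γ^2) (δ^2)) (okDiag R γ δ)
        (LinearMap.ext fun x => diag_comp R (γ^2) (δ^2) γ δ hgg' hdd' x)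
        (LinearMap.ext fun x => diag_comp R γ δ (γ^2) (δ^2) hgg hdd x)
    have hDs : ∀ x, D.symm x = okDiag R γ δ x := fun x => rfl
    refine ⟨⟨D.symm ≪≫ₗ φ, γ^2, δ^2⟩, ⟨?_, ?_, ?_, ?_, ?_⟩, ?_⟩
    · intro x y
      show φ (D.symm (okMul R x y)) = okMul R (φ (D.symm x)) (φ (D.symm y))
      rw [hDs, hDs, hDs, diag_mul R γ δ hγ3 hδ3, hφ]
    · show φ (D.symm (oke R)) = oke R
      rw [hDs, ← uform, hu, LinearEquiv.apply_symm_apply]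
    · show (γ^2)^3 = 1
      linear_combination (γ^3 + 1) * hγ3
    · show (δ^2)^3 = 1
      linear_combination (δ^3 + 1) * hδ3
    · intro x
      show φ x = φ (D.symm (okDiag R (γ^2) (δ^2) x))
      rw [hDs, diag_comp R γ δ (γ^2) (δ^2) hgg hdd]
    · rintro ⟨h', α', β'⟩ ⟨hm', hf', ha', hb', hfac'⟩
      simp only at hfac' hf' ha' hb'
      have hw : φ (okDiag R (α'^2) (β'^2) (oke R)) = oke R := by
        rw [hfac' (okDiag R (α'^2) (β'^2) (oke R)),
          diag_comp R α' β' (α'^2) (β'^2) (by linear_combination ha') (by linear_combination hb'),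
          hf']
      have hwu : okDiag R (α'^2) (β'^2) (oke R) = u := by
        have hc := congrArg φ.symm hw
        rwa [LinearEquiv.symm_apply_apply, ← hu] at hc
      have hα'2 : α'^2 = γ := by
        have hc := congrFun hwu i10
        rw [okDiag_apply, oke_apply, mul_one, show ((i10:OkG)).1 = 1 from rfl,
          show ((i10:OkG)).2 = 0 from rfl, hv1, hv0, pow_one, pow_zero, mul_one, ← hγ] at hc
        exact hc
      have hβ'2 : β'^2 = δ := by
        have hc := congrFun hwu i01
        rw [okDiag_apply, oke_apply, mul_one, show ((i01:OkG)).1 = 0 from rfl,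
          show ((i01:OkG)).2 = 1 from rfl, hv1, hv0, pow_one, pow_zero, one_mul, ← hδ] at hc
        exact hc
      have hα' : α' = γ^2 := by rw [← hα'2]; linear_combination (-α') * ha'
      have hβ' : β' = δ^2 := by rw [← hβ'2]; linear_combination (-β') * hb'
      have hh : h' = D.symm ≪≫ₗ φ := by
        refine LinearEquiv.toLinearMap_injective (LinearMap.ext fun y => ?_)
        have hc := hfac' (okDiag R γ δ y)
        rw [hα', hβ', diag_comp R (γ^2) (δ^2) γ δ hgg' hdd'] at hc
        show h' y = φ (D.symm y)
        rw [← hc, hDs]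
      exact Prod.ext hh (Prod.ext hα' hβ')
end
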